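/- Suppose γ' is an (ε,κ) good approximation of γ, and let g : X → ℝ be a continuous function such that |g(x) − g(y)| ≤ η·‖g‖_{C^0} whenever d(x,y) < ε. Then |∫ g dδ_{γ'} − ∫ g dδ_γ| ≤ (η + 2(1−κ))·‖g‖_{C^0}, where δ_γ denotes the uniform atomic probability measure on the periodic orbit γ. -/
import Mathlib


/-- A periodic orbit of `f`, given by a point together with its (minimal) period. -/
structure PeriodicOrbitData {X : Type*} [MetricSpace X] (f : X → X) where
  pt : X
  per : ℕ
  per_pos : 0 < per
  periodic : f^[per] pt = pt
  minimal : ∀ k, 0 < k → k < per → f^[k] pt ≠ pt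

/-- The orbit of a periodic point, as a finite set. -/
noncomputable def orbitFinset {X : Type*} [MetricSpace X] (f : X → X)
    (γ : PeriodicOrbitData f) : Finset X :=
  haveI := Classical.decEq X
  (Finset.range γ.per).image (fun i => f^[i] γ.pt)

/-- `γ'` is an `(ε, κ)` good approximation of `γ`. -/
def IsGoodApprox {X : Type*} [MetricSpace X] (f : X → X) (ε κ : ℝ)
    (γ' γ : PeriodicOrbitData f) : Prop :=
  ∃ (s : Finset X) (P : X → X),
    s ⊆ orbitFinset f γ' ∧
    (∀ y ∈ s, P y ∈ orbitFinset f γ) ∧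
    (∀ y ∈ s, ∀ i < γ.per, dist (f^[i] y) (f^[i] (P y)) < ε) ∧
    κ ≤ (s.card : ℝ) / (γ'.per : ℝ) ∧
    ∃ m : ℕ, ∀ x ∈ orbitFinset f γ, {y ∈ (s : Set X) | P y = x}.ncard = m

/-- Points `f^[i] pt` for `i < per` are pairwise distinct (minimality of the period). -/
lemma orbit_injOn {X : Type*} [MetricSpace X] {f : X → X} (hf : Function.Injective f)
    (γ : PeriodicOrbitData f) :
    Set.InjOn (fun i => f^[i] γ.pt) (Finset.range γ.per) := by
  have key : ∀ i j, i < j → j < γ.per → f^[i] γ.pt ≠ f^[j] γ.pt := by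
    intro i j hij hj h
    have h2 : f^[i] (f^[j - i] γ.pt) = f^[i] γ.pt := by
      rw [← Function.iterate_add_apply]
      rw [show i + (j - i) = j by omega]
      exact h.symm
    exact γ.minimal (j - i) (by omega) (by omega) ((hf.iterate i) h2)
  intro i hi j hj hij
  simp only [Finset.coe_range, Set.mem_Iio] at hi hj
  by_contra hne
  rcases lt_or_gt_of_ne hne with hlt | hlt
  · exact key i j hlt hj hij
  · exact key j i hlt hi hij.symm

theorem goodApprox_integral_estimate {X : Type*} [MetricSpace X] [CompactSpace X]
    (f : X ≃ₜ X) (ε κ η : ℝ) (hε : 0 < ε) (hκ : κ ∈ Set.Ioo (0 : ℝ) 1) (hη : 0 < η)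
    (γ' γ : PeriodicOrbitData (f : X → X))
    (h : IsGoodApprox (f : X → X) ε κ γ' γ)
    (g : C(X, ℝ))
    (hg : ∀ x y : X, dist x y < ε → |g x - g y| ≤ η * ‖g‖) :
    |(1 / (γ'.per : ℝ)) * ∑ i ∈ Finset.range γ'.per, g ((f : X → X)^[i] γ'.pt)
      - (1 / (γ.per : ℝ)) * ∑ i ∈ Finset.range γ.per, g ((f : X → X)^[i] γ.pt)|
      ≤ (η + 2 * (1 - κ)) * ‖g‖ := by
  classical
  obtain ⟨s, P, hs_sub, hP_mem, hP_close, hκ_card, m, hm⟩ := h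
  have hfinj : Function.Injective (f : X → X) := f.injective
  have hG : (0 : ℝ) ≤ ‖g‖ := norm_nonneg g
  have hgb : ∀ x : X, |g x| ≤ ‖g‖ := by
    intro x
    simpa [Real.norm_eq_abs] using g.norm_coe_le_norm x
  have hinj' := orbit_injOn hfinj γ'
  have hinj := orbit_injOn hfinj γ
  have hcard' : (orbitFinset (f : X → X) γ').card = γ'.per := by
    rw [orbitFinset, Finset.card_image_of_injOn hinj', Finset.card_range]
  have hcard : (orbitFinset (f : X → X) γ).card = γ.per := by
    rw [orbitFinset, Finset.card_image_of_injOn hinj, Finset.card_range]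
  have hsum' : ∑ i ∈ Finset.range γ'.per, g ((f : X → X)^[i] γ'.pt)
      = ∑ y ∈ orbitFinset (f : X → X) γ', g y := by
    rw [orbitFinset, Finset.sum_image (fun a ha b hb hab => hinj' ha hb hab)]
  have hsum : ∑ i ∈ Finset.range γ.per, g ((f : X → X)^[i] γ.pt)
      = ∑ y ∈ orbitFinset (f : X → X) γ, g y := by
    rw [orbitFinset, Finset.sum_image (fun a ha b hb hab => hinj ha hb hab)]
  set R : ℝ := ∑ y ∈ orbitFinset (f : X → X) γ', g y with hR
  set T : ℝ := ∑ y ∈ orbitFinset (f : X → X) γ, g y with hT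
  set S : ℝ := ∑ y ∈ s, g y with hS
  -- fiber cardinalities
  have hfiber : ∀ x ∈ orbitFinset (f : X → X) γ, (s.filter (fun y => P y = x)).card = m := by
    intro x hx
    have h1 := hm x hx
    have h2 : {y ∈ (s : Set X) | P y = x} = ↑(s.filter (fun y => P y = x)) := by
      ext y; simp [Set.mem_setOf_eq]
    rw [h2, Set.ncard_coe_finset] at h1
    exact h1
  have hscard : s.card = γ.per * m := by
    rw [Finset.card_eq_sum_card_fiberwise hP_mem,
      Finset.sum_congr rfl hfiber, Finset.sum_const, hcard, smul_eq_mul]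
  -- the sum over s is fiberwise close to m * (sum over orbit γ)
  have hE1 : |S - (m : ℝ) * T| ≤ (s.card : ℝ) * (η * ‖g‖) := by
    have hfib_sum : S = ∑ x ∈ orbitFinset (f : X → X) γ,
        ∑ y ∈ s.filter (fun y => P y = x), g y :=
      (Finset.sum_fiberwise_of_maps_to hP_mem g).symm
    have hmT : (m : ℝ) * T = ∑ x ∈ orbitFinset (f : X → X) γ, (m : ℝ) * g x := by
      rw [hT, Finset.mul_sum]
    rw [hfib_sum, hmT, ← Finset.sum_sub_distrib]
    calc |∑ x ∈ orbitFinset (f : X → X) γ,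
            ((∑ y ∈ s.filter (fun y => P y = x), g y) - (m : ℝ) * g x)|
        ≤ ∑ x ∈ orbitFinset (f : X → X) γ,
            |(∑ y ∈ s.filter (fun y => P y = x), g y) - (m : ℝ) * g x| :=
          Finset.abs_sum_le_sum_abs _ _
      _ ≤ ∑ _x ∈ orbitFinset (f : X → X) γ, (m : ℝ) * (η * ‖g‖) := by
          apply Finset.sum_le_sum
          intro x hx
          have hmx : ((s.filter (fun y => P y = x)).card : ℝ) = (m : ℝ) := by
            exact_mod_cast congrArg Nat.cast (hfiber x hx)
          have hmg : (m : ℝ) * g x = ∑ _y ∈ s.filter (fun y => P y = x), g x := by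
            rw [Finset.sum_const, nsmul_eq_mul, hmx]
          rw [hmg, ← Finset.sum_sub_distrib]
          calc |∑ y ∈ s.filter (fun y => P y = x), (g y - g x)|
              ≤ ∑ y ∈ s.filter (fun y => P y = x), |g y - g x| :=
                Finset.abs_sum_le_sum_abs _ _
            _ ≤ ∑ _y ∈ s.filter (fun y => P y = x), (η * ‖g‖) := by
                apply Finset.sum_le_sum
                intro y hy
                rw [Finset.mem_filter] at hy
                have hdy : dist y x < ε := by
                  have := hP_close y hy.1 0 γ.per_pos
                  simpa [hy.2] using this
                exact hg y x hdy
            _ = (m : ℝ) * (η * ‖g‖) := by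
                rw [Finset.sum_const, nsmul_eq_mul, hmx]
      _ = (s.card : ℝ) * (η * ‖g‖) := by
          rw [Finset.sum_const, hcard, nsmul_eq_mul, ← mul_assoc]
          congr 1
          rw [hscard]
          push_cast
          ring
  -- the sum over the rest of orbit γ' is small
  have hE2 : |R - S| ≤ ((γ'.per : ℝ) - s.card) * ‖g‖ := by
    have hsd : R - S = ∑ y ∈ orbitFinset (f : X → X) γ' \ s, g y := by
      rw [hR, hS, ← Finset.sum_sdiff hs_sub]; ring
    rw [hsd]
    calc |∑ y ∈ orbitFinset (f : X → X) γ' \ s, g y|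
        ≤ ∑ y ∈ orbitFinset (f : X → X) γ' \ s, |g y| := Finset.abs_sum_le_sum_abs _ _
      _ ≤ ∑ _y ∈ orbitFinset (f : X → X) γ' \ s, ‖g‖ := Finset.sum_le_sum (fun y _ => hgb y)
      _ = (((orbitFinset (f : X → X) γ' \ s).card : ℕ) : ℝ) * ‖g‖ := by
          rw [Finset.sum_const, nsmul_eq_mul]
      _ = ((γ'.per : ℝ) - s.card) * ‖g‖ := by
          have hle : s.card ≤ (orbitFinset (f : X → X) γ').card := Finset.card_le_card hs_sub
          rw [Finset.card_sdiff_of_subset hs_sub, hcard', Nat.cast_sub (hcard' ▸ hle)]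
  have hTb : |T| ≤ (γ.per : ℝ) * ‖g‖ := by
    calc |T| ≤ ∑ y ∈ orbitFinset (f : X → X) γ, |g y| := Finset.abs_sum_le_sum_abs _ _
      _ ≤ ∑ _y ∈ orbitFinset (f : X → X) γ, ‖g‖ := Finset.sum_le_sum (fun y _ => hgb y)
      _ = (γ.per : ℝ) * ‖g‖ := by rw [Finset.sum_const, hcard, nsmul_eq_mul]
  -- numeric setup
  have hN' : (0 : ℝ) < (γ'.per : ℝ) := by exact_mod_cast γ'.per_pos
  have hN : (0 : ℝ) < (γ.per : ℝ) := by exact_mod_cast γ.per_pos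
  have hsc_le : (s.card : ℝ) ≤ (γ'.per : ℝ) := by
    have hle : s.card ≤ (orbitFinset (f : X → X) γ').card := Finset.card_le_card hs_sub
    rw [hcard'] at hle
    exact_mod_cast hle
  have hκc : κ * (γ'.per : ℝ) ≤ (s.card : ℝ) := by
    rw [le_div_iff₀ hN'] at hκ_card
    exact hκ_card
  have hMN : (m : ℝ) * (γ.per : ℝ) = (s.card : ℝ) := by
    rw [hscard]; push_cast; ring
  -- decompose the difference
  have key : (1 / (γ'.per : ℝ)) * (∑ i ∈ Finset.range γ'.per, g ((f : X → X)^[i] γ'.pt))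
      - (1 / (γ.per : ℝ)) * (∑ i ∈ Finset.range γ.per, g ((f : X → X)^[i] γ.pt))
      = (R - S) / (γ'.per : ℝ) + (S - (m : ℝ) * T) / (γ'.per : ℝ)
        + T * (((m : ℝ) * (γ.per : ℝ) - (γ'.per : ℝ)) / ((γ.per : ℝ) * (γ'.per : ℝ))) := by
    rw [hsum', hsum]
    field_simp
    ring
  have t1 : |(R - S) / (γ'.per : ℝ)| ≤ (1 - κ) * ‖g‖ := by
    rw [abs_div, abs_of_pos hN', div_le_iff₀ hN']
    refine le_trans hE2 ?_
    nlinarith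
  have t2 : |(S - (m : ℝ) * T) / (γ'.per : ℝ)| ≤ η * ‖g‖ := by
    rw [abs_div, abs_of_pos hN', div_le_iff₀ hN']
    refine le_trans hE1 ?_
    nlinarith [mul_nonneg (mul_nonneg hη.le hG) (sub_nonneg.2 hsc_le)]
  have t3 : |T * (((m : ℝ) * (γ.per : ℝ) - (γ'.per : ℝ)) / ((γ.per : ℝ) * (γ'.per : ℝ)))|
      ≤ (1 - κ) * ‖g‖ := by
    rw [abs_mul, abs_div, abs_of_pos (mul_pos hN hN'), hMN,
      abs_of_nonpos (by linarith : (s.card : ℝ) - (γ'.per : ℝ) ≤ 0)]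
    rw [← mul_div_assoc, div_le_iff₀ (mul_pos hN hN')]
    have h1 : |T| * -((s.card : ℝ) - (γ'.per : ℝ))
        ≤ ((γ.per : ℝ) * ‖g‖) * ((γ'.per : ℝ) - (s.card : ℝ)) := by
      have := mul_le_mul_of_nonneg_right hTb
        (by linarith : (0:ℝ) ≤ (γ'.per : ℝ) - (s.card : ℝ))
      linarith
    have h2 : ((γ.per : ℝ) * ‖g‖) * ((γ'.per : ℝ) - (s.card : ℝ))
        ≤ ((γ.per : ℝ) * ‖g‖) * ((1 - κ) * (γ'.per : ℝ)) := by
      apply mul_le_mul_of_nonneg_left _ (mul_nonneg hN.le hG)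
      linarith
    linarith
  calc |(1 / (γ'.per : ℝ)) * ∑ i ∈ Finset.range γ'.per, g ((f : X → X)^[i] γ'.pt)
      - (1 / (γ.per : ℝ)) * ∑ i ∈ Finset.range γ.per, g ((f : X → X)^[i] γ.pt)|
      = |(R - S) / (γ'.per : ℝ) + (S - (m : ℝ) * T) / (γ'.per : ℝ)
        + T * (((m : ℝ) * (γ.per : ℝ) - (γ'.per : ℝ)) / ((γ.per : ℝ) * (γ'.per : ℝ)))| := by
        rw [key]
    _ ≤ |(R - S) / (γ'.per : ℝ)| + |(S - (m : ℝ) * T) / (γ'.per : ℝ)|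
        + |T * (((m : ℝ) * (γ.per : ℝ) - (γ'.per : ℝ)) / ((γ.per : ℝ) * (γ'.per : ℝ)))| :=
        abs_add_three _ _ _
    _ ≤ (1 - κ) * ‖g‖ + η * ‖g‖ + (1 - κ) * ‖g‖ :=
        add_le_add (add_le_add t1 t2) t3
    _ = (η + 2 * (1 - κ)) * ‖g‖ := by ring
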